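/- Let N be the direct sum of countably many Prüfer 2-groups C_{2^∞} and let x be an involution acting on N by inversion, G = N ⋊ ⟨x⟩. Then the center of G is infinite (consisting of 1 and all involutions of N), but G' = N, so the abelianization G/G' has order 2 and is finite. -/

import Mathlib

open DirectSum

/-- The Prüfer 2-group `C_{2^∞}`, realized as the group of complex roots of unity
of 2-power order. -/
def Prufer2 : Subgroup ℂˣ where
  carrier := {z | ∃ n : ℕ, z ^ (2 ^ n) = 1}
  one_mem' := ⟨0, one_pow _⟩
  mul_mem' := by
    rintro a b ⟨n, ha⟩ ⟨m, hb⟩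
    refine ⟨n + m, ?_⟩
    have h2 : (2 : ℕ) ^ (n + m) = 2 ^ n * 2 ^ m := pow_add 2 n m
    rw [mul_pow, h2, pow_mul, ha, one_pow, one_mul, mul_comm ((2:ℕ) ^ n) (2 ^ m),
      pow_mul, hb, one_pow]
  inv_mem' := by
    rintro a ⟨n, ha⟩
    exact ⟨n, by rw [inv_pow, ha, inv_one]⟩

/-- `N = ⊕_{i ∈ ℕ} C_{2^∞}`, a direct sum of countably many Prüfer 2-groups. -/
abbrev PruferSum : Type := ⨁ _i : ℕ, Additive ↥Prufer2

/-- The involution `x` acting on `N` by inversion, as an automorphism. -/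
def invAut : MulAut (Multiplicative PruferSum) := MulEquiv.inv (Multiplicative PruferSum)

/-- `G = N ⋊ ⟨x⟩`, the semidirect product of `N` with the involution acting by inversion. -/
abbrev PruferExt : Type :=
  SemidirectProduct (Multiplicative PruferSum) ↥(Subgroup.zpowers invAut)
    (Subgroup.zpowers invAut).subtype

lemma prufer_sqrt (z : ↥Prufer2) : ∃ w : ↥Prufer2, w * w = z := by
  obtain ⟨n, hn⟩ := z.2
  obtain ⟨w, hw⟩ := IsAlgClosed.exists_pow_nat_eq ((z : ℂˣ) : ℂ) (n := 2) zero_lt_two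
  have hw0 : w ≠ 0 := by
    intro h
    rw [h] at hw
    simp at hw
    exact (Units.ne_zero _ hw.symm)
  have key : Units.mk0 w hw0 ^ 2 = (z : ℂˣ) := Units.ext (by simp [hw])
  refine ⟨⟨Units.mk0 w hw0, ⟨n + 1, ?_⟩⟩, ?_⟩
  · rw [pow_succ', pow_mul, key, hn]
  · apply Subtype.ext
    show Units.mk0 w hw0 * Units.mk0 w hw0 = (z : ℂˣ)
    rw [← sq]; exact key

lemma pruferSum_half (v : PruferSum) : ∃ w : PruferSum, w + w = v := by
  induction v using DirectSum.induction_on with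
  | zero => exact ⟨0, by simp⟩
  | of i a =>
      obtain ⟨w, hw⟩ := prufer_sqrt a.toMul
      refine ⟨DirectSum.of _ i (Additive.ofMul w), ?_⟩
      have h : Additive.ofMul w + Additive.ofMul w = a := by
        rw [← ofMul_mul, hw]
        rfl
      rw [← map_add, h]
  | add x y hx hy =>
      obtain ⟨wx, hwx⟩ := hx
      obtain ⟨wy, hwy⟩ := hy
      exact ⟨wx + wy, by rw [← hwx, ← hwy]; abel⟩

lemma invAut_sq : invAut ^ 2 = 1 := by
  ext x : 1
  simp only [invAut, sq]
  exact inv_inv x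

noncomputable def iunit : ℂˣ := Units.mk0 Complex.I Complex.I_ne_zero

lemma iunit_mem : iunit ∈ Prufer2 := ⟨2, by
  apply Units.ext
  show (Complex.I) ^ (2^2 : ℕ) = 1
  norm_num [pow_succ, Complex.I_mul_I]⟩


noncomputable def uI : ↥Prufer2 := ⟨iunit, iunit_mem⟩

lemma invAut_ne_one : invAut ≠ 1 := by
  intro h
  have h1 : (DirectSum.of (fun _ : ℕ => Additive ↥Prufer2) 0 (Additive.ofMul uI) : PruferSum)
      = - DirectSum.of (fun _ : ℕ => Additive ↥Prufer2) 0 (Additive.ofMul uI) := by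
    have := congrArg (fun f : MulAut (Multiplicative PruferSum) =>
      f (Multiplicative.ofAdd (DirectSum.of (fun _ : ℕ => Additive ↥Prufer2) 0
        (Additive.ofMul uI)))) h.symm
    exact this
  have h2 := congrArg (fun v : PruferSum => v 0) h1
  simp only [DirectSum.of_eq_same, DFinsupp.neg_apply] at h2
  have h3 : uI * uI = 1 := by
    have : uI = uI⁻¹ := h2
    nth_rewrite 2 [this]
    exact mul_inv_cancel uI
  have h4 : Complex.I * Complex.I = 1 := by
    have := congrArg (fun z : ↥Prufer2 => ((z : ℂˣ) : ℂ)) h3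
    simpa [uI, iunit] using this
  rw [Complex.I_mul_I] at h4
  norm_num at h4

noncomputable def negOne : ↥Prufer2 := ⟨-1, ⟨1, by
  apply Units.ext
  show ((-1 : ℂˣ) : ℂ) ^ (2 ^ 1 : ℕ) = 1
  norm_num⟩⟩

lemma negOne_inv : negOne⁻¹ = negOne := by
  apply Subtype.ext
  show (-1 : ℂˣ)⁻¹ = -1
  exact inv_eq_of_mul_eq_one_right (by simp)

lemma negOne_ne_one : negOne ≠ 1 := by
  intro h
  have := congrArg (fun z : ↥Prufer2 => ((z : ℂˣ) : ℂ)) h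
  simp [negOne] at this
  norm_num at this

lemma inl_mem_center {n : Multiplicative PruferSum} (hn : n⁻¹ = n) :
    (SemidirectProduct.inl n : PruferExt) ∈ Subgroup.center PruferExt := by
  rw [Subgroup.mem_center_iff]
  intro g
  have hfix : ∀ c : ↥(Subgroup.zpowers invAut), (Subgroup.zpowers invAut).subtype c n = n := by
    rintro ⟨c, hc⟩
    have hst : invAut ∈ MulAction.stabilizer (MulAut (Multiplicative PruferSum)) n := by
      show invAut • n = n
      exact hn
    exact Subgroup.zpowers_le.mpr hst hc
  ext
  · rw [SemidirectProduct.mul_left, SemidirectProduct.mul_left,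
      SemidirectProduct.left_inl, SemidirectProduct.right_inl, map_one,
      MulAut.one_apply, hfix g.right]
    exact mul_comm _ _
  · rw [SemidirectProduct.mul_right, SemidirectProduct.mul_right,
      SemidirectProduct.right_inl, mul_one, one_mul]

noncomputable def centElt (i : ℕ) : PruferExt :=
  SemidirectProduct.inl (Multiplicative.ofAdd
    (DirectSum.of (fun _ : ℕ => Additive ↥Prufer2) i (Additive.ofMul negOne)))

lemma centElt_mem (i : ℕ) : centElt i ∈ Subgroup.center PruferExt := by
  apply inl_mem_center
  have h1 : -(Additive.ofMul negOne) = Additive.ofMul negOne := by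
    show Additive.ofMul negOne⁻¹ = Additive.ofMul negOne
    rw [negOne_inv]
  have h2 : -(DirectSum.of (fun _ : ℕ => Additive ↥Prufer2) i (Additive.ofMul negOne))
      = DirectSum.of (fun _ : ℕ => Additive ↥Prufer2) i (Additive.ofMul negOne) := by
    rw [← map_neg, h1]
  exact congrArg Multiplicative.ofAdd h2

lemma centElt_injective : Function.Injective centElt := by
  intro i j h
  by_contra hij
  have h2 : (DirectSum.of (fun _ : ℕ => Additive ↥Prufer2) i (Additive.ofMul negOne))
      = DirectSum.of (fun _ : ℕ => Additive ↥Prufer2) j (Additive.ofMul negOne) :=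
    Multiplicative.ofAdd.injective (SemidirectProduct.inl_injective h)
  have h3 := congrArg (fun v : PruferSum => v i) h2
  simp only [DirectSum.of_eq_same, DirectSum.of_eq_of_ne _ _ _ hij] at h3
  exact negOne_ne_one h3

theorem prufer_center_infinite : Infinite ↥(Subgroup.center PruferExt) :=
  Infinite.of_injective (fun i => (⟨centElt i, centElt_mem i⟩ : ↥(Subgroup.center PruferExt)))
    (fun i j h => centElt_injective (congrArg Subtype.val h))

noncomputable def xInv : ↥(Subgroup.zpowers invAut) := ⟨invAut, Subgroup.mem_zpowers _⟩

open scoped commutatorElement in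
lemma comm_eq : commutator PruferExt =
    (SemidirectProduct.inl : Multiplicative PruferSum →* PruferExt).range := by
  apply le_antisymm
  · rw [SemidirectProduct.range_inl_eq_ker_rightHom, commutator_def]
    rw [Subgroup.commutator_le]
    intro g _ h _
    show SemidirectProduct.rightHom ⁅g, h⁆ = 1
    rw [map_commutatorElement]
    exact commutatorElement_eq_one_iff_commute.mpr (mul_comm' _ _)
  · rintro _ ⟨n, rfl⟩
    obtain ⟨w, hw⟩ := pruferSum_half n.toAdd
    set m : Multiplicative PruferSum := Multiplicative.ofAdd w with hm
    have hmm : m * m = n := by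
      show Multiplicative.ofAdd (w + w) = n
      rw [hw]
      rfl
    have key : ⁅(SemidirectProduct.inr xInv : PruferExt),
        (SemidirectProduct.inl m⁻¹ : PruferExt)⁆ = SemidirectProduct.inl n := by
      show SemidirectProduct.inr xInv * SemidirectProduct.inl m⁻¹ *
        (SemidirectProduct.inr xInv)⁻¹ * (SemidirectProduct.inl m⁻¹)⁻¹ = _
      rw [← map_inv, ← SemidirectProduct.inl_aut, ← map_inv, ← map_mul]
      congr 1
      show invAut m⁻¹ * m⁻¹⁻¹ = n
      show m⁻¹⁻¹ * m⁻¹⁻¹ = n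
      convert hmm using 2 <;> exact inv_inv m
    rw [← key]
    exact Subgroup.commutator_mem_commutator (Subgroup.mem_top _) (Subgroup.mem_top _)

theorem prufer_ab_card : Nat.card (Abelianization PruferExt) = 2 := by
  have hker : commutator PruferExt =
      (SemidirectProduct.rightHom :
        PruferExt →* ↥(Subgroup.zpowers invAut)).ker := by
    rw [comm_eq, SemidirectProduct.range_inl_eq_ker_rightHom]
  calc Nat.card (Abelianization PruferExt)
      = Nat.card (PruferExt ⧸ (SemidirectProduct.rightHom :
          PruferExt →* ↥(Subgroup.zpowers invAut)).ker) :=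
        Nat.card_congr (QuotientGroup.quotientMulEquivOfEq hker).toEquiv
    _ = Nat.card ↥(Subgroup.zpowers invAut) :=
        Nat.card_congr (QuotientGroup.quotientKerEquivOfSurjective _
          SemidirectProduct.rightHom_surjective).toEquiv
    _ = orderOf invAut := Nat.card_zpowers invAut
    _ = 2 := orderOf_eq_prime invAut_sq invAut_ne_one


/-- `G = N ⋊ ⟨x⟩` has infinite center, its commutator subgroup equals `N`,
and its abelianization has order `2` (in particular it is finite). -/
theorem prufer_semidirect_infinite_center_finite_abelianization :
    Infinite ↥(Subgroup.center PruferExt) ∧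
    commutator PruferExt =
      (SemidirectProduct.inl : Multiplicative PruferSum →* PruferExt).range ∧
    Nat.card (Abelianization PruferExt) = 2 :=
  ⟨prufer_center_infinite, comm_eq, prufer_ab_card⟩
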